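/- The number of labeled trees on n vertices (equivalently, the number of good generating sets of the symmetric group S_n, i.e., sets of n-1 transpositions generating S_n) is n^{n-2}. -/

import Mathlib

set_option linter.unusedSectionVars false
open Finset Relation

variable {α : Type*} [LinearOrder α]

/-- Reachability in the graph with edge set `E`. -/
def Reach (E : Finset (Sym2 α)) : α → α → Prop :=
  Relation.ReflTransGen (fun x y => s(x, y) ∈ E)

lemma reach_symm {E : Finset (Sym2 α)} : Symmetric (Reach E) :=
  by
    haveI : Std.Symm (fun x y : α => s(x, y) ∈ E) := ⟨fun _ _ h => by rwa [Sym2.eq_swap]⟩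
    exact fun x y h => Std.Symm.symm (r := Relation.ReflTransGen (fun x y : α => s(x, y) ∈ E)) x y h

lemma reach_mono {E E' : Finset (Sym2 α)} (h : E ⊆ E') {x y : α} (hr : Reach E x y) :
    Reach E' x y :=
  Relation.ReflTransGen.mono (fun a b hab => h hab) x y hr

/-- `E` is (the edge set of) a tree on vertex set `s`. -/
def IsTree (s : Finset α) (E : Finset (Sym2 α)) : Prop :=
  (∀ e ∈ E, ∀ v ∈ e, v ∈ s) ∧ (∀ e ∈ E, ¬ e.IsDiag) ∧ E.card + 1 = s.card ∧
    ∀ x ∈ s, ∀ y ∈ s, Reach E x y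

/-- Degree of a vertex. -/
def deg (E : Finset (Sym2 α)) (v : α) : ℕ := (E.filter (fun e => v ∈ e)).card

lemma handshake {s : Finset α} {E : Finset (Sym2 α)}
    (hv : ∀ e ∈ E, ∀ v ∈ e, v ∈ s) (hd : ∀ e ∈ E, ¬ e.IsDiag) :
    ∑ v ∈ s, deg E v = 2 * E.card := by
  unfold deg
  simp only [Finset.card_filter]
  rw [Finset.sum_comm]
  have key : ∀ e ∈ E, (∑ v ∈ s, if v ∈ e then 1 else 0) = 2 := by
    intro e he
    induction e using Sym2.inductionOn with
    | hf a b =>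
      have hab : a ≠ b := fun h => hd _ he (by simp [h])
      have ha : a ∈ s := hv _ he a (by simp)
      have hb : b ∈ s := hv _ he b (by simp)
      rw [← Finset.card_filter]
      have : s.filter (fun v => v ∈ s(a,b)) = {a, b} := by
        ext v; simp only [Finset.mem_filter, Sym2.mem_iff, Finset.mem_insert, Finset.mem_singleton]
        constructor
        · rintro ⟨-, h⟩; exact h
        · rintro (rfl | rfl) <;> simp [ha, hb]
      rw [this, Finset.card_pair hab]
  rw [Finset.sum_congr rfl key, Finset.sum_const, smul_eq_mul, mul_comm]

-- degree ≥ 1 for every vertex of a connected graph with ≥ 2 vertices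
lemma deg_pos {s : Finset α} {E : Finset (Sym2 α)} (ht : IsTree s E) (h2 : 2 ≤ s.card)
    {v : α} (hv : v ∈ s) : 0 < deg E v := by
  obtain ⟨w, hw, hwv⟩ := Finset.exists_mem_ne (s := s) (by omega) v
  have hr : Reach E v w := ht.2.2.2 v hv w hw
  rw [Reach] at hr
  rcases Relation.reflTransGen_iff_eq_or_transGen.mp hr with heq | htg
  · exact absurd heq hwv
  · obtain ⟨z, hz, -⟩ := Relation.TransGen.head'_iff.mp htg
    rw [deg, Finset.card_pos]
    exact ⟨s(v, z), Finset.mem_filter.mpr ⟨hz, by simp⟩⟩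

-- a tree with at least 2 vertices has a leaf
lemma exists_leaf {s : Finset α} {E : Finset (Sym2 α)} (ht : IsTree s E) (h2 : 2 ≤ s.card) :
    ∃ v ∈ s, deg E v = 1 := by
  by_contra h
  push_neg at h
  have hge : ∀ v ∈ s, 2 ≤ deg E v := by
    intro v hv
    have := deg_pos ht h2 hv
    have := h v hv
    omega
  have hsum : 2 * s.card ≤ ∑ v ∈ s, deg E v := by
    calc 2 * s.card = ∑ v ∈ s, 2 := by rw [Finset.sum_const, smul_eq_mul, mul_comm]
    _ ≤ _ := Finset.sum_le_sum hge
  rw [handshake ht.1 ht.2.1] at hsum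
  have := ht.2.2.1
  omega

-- the unique edge at a leaf
lemma leaf_edge {s : Finset α} {E : Finset (Sym2 α)} (ht : IsTree s E)
    {v : α} (hdeg : deg E v = 1) :
    ∃ a, a ≠ v ∧ a ∈ s ∧ s(v, a) ∈ E ∧ ∀ e ∈ E, v ∈ e → e = s(v, a) := by
  rw [deg, Finset.card_eq_one] at hdeg
  obtain ⟨e, he⟩ := hdeg
  have heE : e ∈ E ∧ v ∈ e := by
    have := Finset.mem_filter.mp (he ▸ Finset.mem_singleton_self e)
    exact this
  obtain ⟨heE, hve⟩ := heE
  induction e using Sym2.inductionOn with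
  | hf a b =>
    rcases Sym2.mem_iff.mp hve with rfl | rfl
    · refine ⟨b, ?_, ht.1 _ heE b (by simp), heE, ?_⟩
      · rintro rfl; exact ht.2.1 _ heE (by simp)
      · intro e' he' hve'
        have : e' ∈ E.filter (fun e => v ∈ e) := Finset.mem_filter.mpr ⟨he', hve'⟩
        rw [he] at this; exact Finset.mem_singleton.mp this
    · refine ⟨a, ?_, ht.1 _ heE a (by simp), by rwa [Sym2.eq_swap], ?_⟩
      · rintro rfl; exact ht.2.1 _ heE (by simp)
      · intro e' he' hve'
        have : e' ∈ E.filter (fun e => v ∈ e) := Finset.mem_filter.mpr ⟨he', hve'⟩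
        rw [he] at this
        rw [Finset.mem_singleton.mp this, Sym2.eq_swap]

lemma not_mem_of_outside {s : Finset α} {E : Finset (Sym2 α)}
    (hv : ∀ e ∈ E, ∀ v ∈ e, v ∈ s) {v a : α} (h : v ∉ s) : s(v, a) ∉ E := by
  intro hmem
  exact h (hv _ hmem v (by simp))

lemma deg_insert {E : Finset (Sym2 α)} {e : Sym2 α} (he : e ∉ E) (w : α) :
    deg (insert e E) w = deg E w + (if w ∈ e then 1 else 0) := by
  rw [deg, deg, Finset.filter_insert]
  split_ifs with h
  · rw [Finset.card_insert_of_notMem (fun hc => he (Finset.mem_filter.mp hc).1)]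
  · rfl

/-- Removing a leaf from a tree gives a tree. -/
lemma erase_leaf_tree {s : Finset α} {E : Finset (Sym2 α)} (ht : IsTree s E)
    {v a : α} (hva : s(v, a) ∈ E) (hv : v ∈ s)
    (huniq : ∀ e ∈ E, v ∈ e → e = s(v, a)) :
    IsTree (s.erase v) (E.erase s(v, a)) := by
  have hav : a ≠ v := fun h => ht.2.1 _ hva (by simp [h])
  refine ⟨?_, fun e he => ht.2.1 _ (Finset.mem_of_mem_erase he), ?_, ?_⟩
  · intro e he w hw
    have heE := Finset.mem_of_mem_erase he
    refine Finset.mem_erase.mpr ⟨?_, ht.1 _ heE w hw⟩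
    rintro rfl
    exact (Finset.mem_erase.mp he).1 (huniq e heE hw)
  · rw [Finset.card_erase_of_mem hva, Finset.card_erase_of_mem hv]
    have h1 : 1 ≤ E.card := Finset.card_pos.mpr ⟨_, hva⟩
    have := ht.2.2.1
    omega
  · set f : α → α := fun w => if w = v then a else w with hf
    have key : ∀ x y, Reach E x y → Reach (E.erase s(v, a)) (f x) (f y) := by
      intro x y hr
      induction hr with
      | refl => exact Relation.ReflTransGen.refl
      | @tail b c hr hstep ih =>
        by_cases hc : s(b, c) = s(v, a)
        · have hfb : f b = f c := by
            rcases Sym2.eq_iff.mp hc with ⟨rfl, rfl⟩ | ⟨rfl, rfl⟩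
            · simp [hf, hav]
            · simp [hf, hav, Ne.symm hav]
          rwa [hfb] at ih
        · have hbv : b ≠ v := by
            rintro rfl; exact hc (huniq _ hstep (by simp))
          have hcv : c ≠ v := by
            rintro rfl; exact hc (huniq _ hstep (by simp))
          refine Relation.ReflTransGen.tail ih ?_
          simp only [hf, if_neg hbv, if_neg hcv]
          exact Finset.mem_erase.mpr ⟨hc, hstep⟩
    intro x hx y hy
    have hxv := (Finset.mem_erase.mp hx).1
    have hyv := (Finset.mem_erase.mp hy).1
    have := key x y (ht.2.2.2 x (Finset.mem_of_mem_erase hx) y (Finset.mem_of_mem_erase hy))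
    simpa [hf, if_neg hxv, if_neg hyv] using this

/-- Adding a leaf to a tree gives a tree. -/
lemma insert_leaf_tree {s : Finset α} {E' : Finset (Sym2 α)} {v a : α}
    (ht : IsTree (s.erase v) E') (hv : v ∈ s) (ha : a ∈ s.erase v) :
    IsTree s (insert s(v, a) E') := by
  have hvnotin : s(v, a) ∉ E' := not_mem_of_outside ht.1 (Finset.notMem_erase v s)
  have hva : v ≠ a := fun h => (Finset.mem_erase.mp ha).1 h.symm
  refine ⟨?_, ?_, ?_, ?_⟩
  · intro e he w hw
    rcases Finset.mem_insert.mp he with rfl | he'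
    · rcases Sym2.mem_iff.mp hw with rfl | rfl
      · exact hv
      · exact Finset.mem_of_mem_erase ha
    · exact Finset.mem_of_mem_erase (ht.1 _ he' w hw)
  · intro e he
    rcases Finset.mem_insert.mp he with rfl | he'
    · simpa using hva
    · exact ht.2.1 _ he'
  · rw [Finset.card_insert_of_notMem hvnotin]
    have := ht.2.2.1
    rw [Finset.card_erase_of_mem hv] at this
    have : 1 ≤ s.card := Finset.card_pos.mpr ⟨v, hv⟩
    have := ht.2.2.1
    rw [Finset.card_erase_of_mem hv] at this
    omega
  · have hstep : Reach (insert s(v, a) E') v a :=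
      Relation.ReflTransGen.single (Finset.mem_insert_self _ _)
    have toa : ∀ x ∈ s, Reach (insert s(v, a) E') x a := by
      intro x hx
      by_cases hxv : x = v
      · exact hxv ▸ hstep
      · exact reach_mono (Finset.subset_insert _ _)
          (ht.2.2.2 x (Finset.mem_erase.mpr ⟨hxv, hx⟩) a ha)
    intro x hx y hy
    exact Relation.ReflTransGen.trans (toa x hx) (reach_symm (toa y hy))

/-- Prüfer decoding. -/
def decode (s : Finset α) : List α → Finset (Sym2 α)
  | [] => s.sym2.filter (fun e => ¬ e.IsDiag)
  | (a :: l) =>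
    if h : (s \ (a :: l).toFinset).Nonempty then
      insert s((s \ (a :: l).toFinset).min' h, a)
        (decode (s.erase ((s \ (a :: l).toFinset).min' h)) l)
    else ∅

lemma decode_spec (l : List α) : ∀ (s : Finset α), (∀ x ∈ l, x ∈ s) →
    l.length + 2 = s.card →
    IsTree s (decode s l) ∧ ∀ v ∈ s, deg (decode s l) v = l.count v + 1 := by
  induction l with
  | nil =>
    intro s hmem hlen
    simp only [List.length_nil, zero_add] at hlen
    obtain ⟨x, y, hxy, rfl⟩ := Finset.card_eq_two.mp hlen.symm
    have hE : decode {x, y} ([] : List α) = {s(x, y)} := by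
      rw [decode]
      ext e
      induction e using Sym2.inductionOn with
      | hf a b =>
        simp only [Finset.mem_filter, Finset.mk_mem_sym2_iff, Finset.mem_insert,
          Finset.mem_singleton, Sym2.isDiag_iff_proj_eq, Sym2.eq_iff]
        constructor
        · rintro ⟨⟨(rfl | rfl), (rfl | rfl)⟩, hd⟩ <;> simp_all
        · rintro (⟨rfl, rfl⟩ | ⟨rfl, rfl⟩) <;> simp_all [hxy, hxy.symm]
    rw [hE]
    constructor
    · refine ⟨?_, ?_, ?_, ?_⟩
      · intro e he w hw
        rw [Finset.mem_singleton] at he; subst he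
        rcases Sym2.mem_iff.mp hw with rfl | rfl <;> simp
      · intro e he
        rw [Finset.mem_singleton] at he; subst he
        simpa using hxy
      · simp [hlen.symm]
      · intro u hu w hw
        have hR : ∀ z ∈ ({x, y} : Finset α), Reach ({s(x,y)} : Finset (Sym2 α)) x z := by
          intro z hz
          rcases Finset.mem_insert.mp hz with rfl | hz
          · exact Relation.ReflTransGen.refl
          · rw [Finset.mem_singleton] at hz; subst hz
            exact Relation.ReflTransGen.single (by simp)
        exact Relation.ReflTransGen.trans (reach_symm (hR u hu)) (hR w hw)
    · intro v hv
      simp only [List.count_nil]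
      rcases Finset.mem_insert.mp hv with rfl | hv
      · rw [deg]; rw [Finset.filter_singleton]; simp
      · rw [Finset.mem_singleton] at hv; subst hv
        rw [deg]; rw [Finset.filter_singleton]; simp
  | cons a l ih =>
    intro s hmem hlen
    have hsub : (a :: l).toFinset ⊆ s := by
      intro x hx
      exact hmem x (List.mem_toFinset.mp hx)
    have hne : (s \ (a :: l).toFinset).Nonempty := by
      rw [Finset.sdiff_nonempty]
      intro hcon
      have h1 := Finset.card_le_card hcon
      have h2 := List.toFinset_card_le (a :: l)
      simp only [List.length_cons] at h2 hlen
      omega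
    set ℓ := (s \ (a :: l).toFinset).min' hne with hℓdef
    have hℓmem : ℓ ∈ s \ (a :: l).toFinset := Finset.min'_mem _ hne
    have hℓs : ℓ ∈ s := (Finset.mem_sdiff.mp hℓmem).1
    have hℓnot : ℓ ∉ (a :: l).toFinset := (Finset.mem_sdiff.mp hℓmem).2
    have hℓa : ℓ ≠ a := fun h => hℓnot (by simp [h])
    have hℓl : ℓ ∉ l := fun h => hℓnot (by simp [h])
    have hmem' : ∀ x ∈ l, x ∈ s.erase ℓ := by
      intro x hx
      exact Finset.mem_erase.mpr ⟨fun h => hℓl (h ▸ hx), hmem x (List.mem_cons_of_mem a hx)⟩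
    have hlen' : l.length + 2 = (s.erase ℓ).card := by
      rw [Finset.card_erase_of_mem hℓs]
      simp only [List.length_cons] at hlen
      omega
    obtain ⟨iht, ihd⟩ := ih (s.erase ℓ) hmem' hlen'
    have hdec : decode s (a :: l) = insert s(ℓ, a) (decode (s.erase ℓ) l) := by
      rw [decode, dif_pos hne]
    have has : a ∈ s.erase ℓ :=
      Finset.mem_erase.mpr ⟨Ne.symm hℓa, hmem a (List.mem_cons_self)⟩
    have hnotin : s(ℓ, a) ∉ decode (s.erase ℓ) l :=
      not_mem_of_outside iht.1 (Finset.notMem_erase ℓ s)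
    constructor
    · rw [hdec]
      exact insert_leaf_tree iht hℓs has
    · intro v hv
      rw [hdec, deg_insert hnotin]
      by_cases hvℓ : v = ℓ
      · have hdeg0 : deg (decode (s.erase ℓ) l) ℓ = 0 := by
          rw [deg, Finset.card_eq_zero, Finset.filter_eq_empty_iff]
          intro e he hve
          exact Finset.notMem_erase ℓ s (iht.1 e he ℓ hve)
        rw [hvℓ, hdeg0]
        simp [List.count_cons, hℓa, hℓl, List.count_eq_zero_of_not_mem hℓl, Ne.symm hℓa]
      · have hv' : v ∈ s.erase ℓ := Finset.mem_erase.mpr ⟨hvℓ, hv⟩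
        rw [ihd v hv']
        by_cases hva : v = a
        · subst hva
          simp [Sym2.mem_iff, List.count_cons, Ne.symm hvℓ]
        · have : v ∉ s(ℓ, a) := by
            rw [Sym2.mem_iff]; push_neg; exact ⟨hvℓ, hva⟩
          simp [this, List.count_cons, hva, Ne.symm hva]

lemma decode_injective : ∀ (l₁ l₂ : List α) (s : Finset α), (∀ x ∈ l₁, x ∈ s) →
    (∀ x ∈ l₂, x ∈ s) → l₁.length + 2 = s.card → l₂.length + 2 = s.card →
    decode s l₁ = decode s l₂ → l₁ = l₂ := by
  intro l₁
  induction l₁ with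
  | nil =>
    intro l₂ s h1 h2 hl1 hl2 heq
    cases l₂ with
    | nil => rfl
    | cons b l₂' => simp only [List.length_cons, List.length_nil] at hl1 hl2; omega
  | cons a l₁' ih =>
    intro l₂ s h1 h2 hl1 hl2 heq
    cases l₂ with
    | nil => simp only [List.length_cons, List.length_nil] at hl1 hl2; omega
    | cons b l₂' =>
      obtain ⟨ht1, hd1⟩ := decode_spec (a :: l₁') s h1 hl1
      obtain ⟨ht2, hd2⟩ := decode_spec (b :: l₂') s h2 hl2
      have hcount : ∀ v, (a :: l₁').count v = (b :: l₂').count v := by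
        intro v
        by_cases hv : v ∈ s
        · have := hd1 v hv
          rw [heq, hd2 v hv] at this
          omega
        · rw [List.count_eq_zero_of_not_mem (fun h => hv (h1 v h)),
            List.count_eq_zero_of_not_mem (fun h => hv (h2 v h))]
      have htf : (a :: l₁').toFinset = (b :: l₂').toFinset := by
        ext v
        simp only [List.mem_toFinset]
        rw [← List.count_pos_iff, ← List.count_pos_iff, hcount]
      -- the two minimums agree
      have hne1 : (s \ (a :: l₁').toFinset).Nonempty := by
        rw [Finset.sdiff_nonempty]
        intro hcon
        have := Finset.card_le_card hcon
        have := List.toFinset_card_le (a :: l₁')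
        simp only [List.length_cons] at hl1 this
        omega
      have hne2 : (s \ (b :: l₂').toFinset).Nonempty := by rwa [← htf]
      set ℓ := (s \ (a :: l₁').toFinset).min' hne1 with hℓdef
      have heqmin : (s \ (b :: l₂').toFinset).min' hne2 = ℓ := by
        rw [hℓdef]; congr 1 <;> rw [htf]
      rw [decode, dif_pos hne1] at heq
      rw [decode, dif_pos hne2, heqmin] at heq
      rw [show (s \ (a :: l₁').toFinset).min' hne1 = ℓ from rfl] at heq
      have hℓmem := Finset.min'_mem _ hne1
      have hℓs : ℓ ∈ s := (Finset.mem_sdiff.mp hℓmem).1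
      have hℓnot : ℓ ∉ (a :: l₁').toFinset := (Finset.mem_sdiff.mp hℓmem).2
      have hℓa : ℓ ≠ a := fun h => hℓnot (by simp [h])
      have hℓl₁ : ℓ ∉ l₁' := fun h => hℓnot (by simp [h])
      have hℓnot2 : ℓ ∉ (b :: l₂').toFinset := htf ▸ hℓnot
      have hℓb : ℓ ≠ b := fun h => hℓnot2 (by simp [h])
      have hℓl₂ : ℓ ∉ l₂' := fun h => hℓnot2 (by simp [h])
      -- sub-decodes
      have hmem1' : ∀ x ∈ l₁', x ∈ s.erase ℓ := fun x hx =>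
        Finset.mem_erase.mpr ⟨fun h => hℓl₁ (h ▸ hx), h1 x (List.mem_cons_of_mem a hx)⟩
      have hmem2' : ∀ x ∈ l₂', x ∈ s.erase ℓ := fun x hx =>
        Finset.mem_erase.mpr ⟨fun h => hℓl₂ (h ▸ hx), h2 x (List.mem_cons_of_mem b hx)⟩
      have hlen1' : l₁'.length + 2 = (s.erase ℓ).card := by
        rw [Finset.card_erase_of_mem hℓs]
        simp only [List.length_cons] at hl1; omega
      have hlen2' : l₂'.length + 2 = (s.erase ℓ).card := by
        rw [Finset.card_erase_of_mem hℓs]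
        simp only [List.length_cons] at hl2; omega
      obtain ⟨hts1, -⟩ := decode_spec l₁' (s.erase ℓ) hmem1' hlen1'
      obtain ⟨hts2, -⟩ := decode_spec l₂' (s.erase ℓ) hmem2' hlen2'
      have hni1 : s(ℓ, a) ∉ decode (s.erase ℓ) l₁' :=
        not_mem_of_outside hts1.1 (Finset.notMem_erase ℓ s)
      have hni2 : s(ℓ, b) ∉ decode (s.erase ℓ) l₂' :=
        not_mem_of_outside hts2.1 (Finset.notMem_erase ℓ s)
      have hab : a = b := by
        have : s(ℓ, a) ∈ insert s(ℓ, b) (decode (s.erase ℓ) l₂') := by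
          rw [← heq]; exact Finset.mem_insert_self _ _
        rcases Finset.mem_insert.mp this with h | h
        · rcases Sym2.eq_iff.mp h with ⟨-, h⟩ | ⟨h, -⟩
          · exact h
          · exact absurd h hℓb
        · exact absurd h (not_mem_of_outside hts2.1 (Finset.notMem_erase ℓ s))
      subst hab
      have hsub : decode (s.erase ℓ) l₁' = decode (s.erase ℓ) l₂' := by
        have := congrArg (fun E => E.erase s(ℓ, a)) heq
        simpa [Finset.erase_insert hni1, Finset.erase_insert hni2] using this
      rw [ih l₂' (s.erase ℓ) hmem1' hmem2' hlen1' hlen2' hsub]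

lemma tree_two {x y : α} (hxy : x ≠ y) {E : Finset (Sym2 α)} (ht : IsTree {x, y} E) :
    E = {s(x, y)} := by
  have hcard : E.card = 1 := by
    have := ht.2.2.1
    rw [Finset.card_pair hxy] at this
    omega
  obtain ⟨e, rfl⟩ := Finset.card_eq_one.mp hcard
  induction e using Sym2.inductionOn with
  | hf u w =>
    have hu : u ∈ ({x, y} : Finset α) := ht.1 _ (Finset.mem_singleton_self _) u (by simp)
    have hw : w ∈ ({x, y} : Finset α) := ht.1 _ (Finset.mem_singleton_self _) w (by simp)
    have huw : u ≠ w := fun h => ht.2.1 _ (Finset.mem_singleton_self _) (by simp [h])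
    simp only [Finset.mem_insert, Finset.mem_singleton] at hu hw
    congr 1
    rcases hu with rfl | rfl <;> rcases hw with rfl | rfl <;>
      first | exact absurd rfl huw | rw [Sym2.eq_iff] <;> simp [hxy, hxy.symm]
    all_goals simp [Sym2.eq_swap]

lemma decode_surjective : ∀ (k : ℕ) (s : Finset α) (E : Finset (Sym2 α)),
    s.card = k + 2 → IsTree s E →
    ∃ l : List α, (∀ x ∈ l, x ∈ s) ∧ l.length + 2 = s.card ∧ decode s l = E := by
  intro k
  induction k with
  | zero =>
    intro s E hcard ht
    obtain ⟨x, y, hxy, rfl⟩ := Finset.card_eq_two.mp hcard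
    refine ⟨[], by simp, by simp [hcard], ?_⟩
    rw [tree_two hxy ht, decode]
    ext e
    induction e using Sym2.inductionOn with
    | hf a b =>
      simp only [Finset.mem_filter, Finset.mk_mem_sym2_iff, Finset.mem_insert,
        Finset.mem_singleton, Sym2.isDiag_iff_proj_eq, Sym2.eq_iff]
      constructor
      · rintro ⟨⟨(rfl | rfl), (rfl | rfl)⟩, hd⟩ <;> simp_all
      · rintro (⟨rfl, rfl⟩ | ⟨rfl, rfl⟩) <;> simp_all [hxy, hxy.symm]
  | succ k ihk =>
    intro s E hcard ht
    have h2 : 2 ≤ s.card := by omega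
    -- minimal leaf
    have hlne : (s.filter (fun v => deg E v = 1)).Nonempty := by
      obtain ⟨v, hv, hdv⟩ := exists_leaf ht h2
      exact ⟨v, Finset.mem_filter.mpr ⟨hv, hdv⟩⟩
    set ℓ := (s.filter (fun v => deg E v = 1)).min' hlne with hℓdef
    have hℓmem := Finset.min'_mem _ hlne
    have hℓs : ℓ ∈ s := (Finset.mem_filter.mp hℓmem).1
    have hℓdeg : deg E ℓ = 1 := (Finset.mem_filter.mp hℓmem).2
    obtain ⟨a, haℓ, has, hedge, huniq⟩ := leaf_edge ht hℓdeg
    have hT' : IsTree (s.erase ℓ) (E.erase s(ℓ, a)) := erase_leaf_tree ht hedge hℓs huniq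
    have hcard' : (s.erase ℓ).card = k + 2 := by
      rw [Finset.card_erase_of_mem hℓs]; omega
    obtain ⟨l', hmem', hlen', hdec'⟩ := ihk (s.erase ℓ) (E.erase s(ℓ, a)) hcard' hT'
    refine ⟨a :: l', ?_, ?_, ?_⟩
    · intro x hx
      rcases List.mem_cons.mp hx with rfl | hx
      · exact has
      · exact Finset.mem_of_mem_erase (hmem' x hx)
    · simp only [List.length_cons]
      rw [Finset.card_erase_of_mem hℓs] at hlen'
      omega
    · -- show decode s (a :: l') = E
      have hℓa' : ℓ ≠ a := Ne.symm haℓ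
      have hℓl' : ℓ ∉ l' := fun h => Finset.notMem_erase ℓ s (hmem' ℓ h)
      have hℓnotin : ℓ ∉ (a :: l').toFinset := by
        simp only [List.toFinset_cons, Finset.mem_insert, List.mem_toFinset]
        push_neg; exact ⟨hℓa', hℓl'⟩
      have hne : (s \ (a :: l').toFinset).Nonempty :=
        ⟨ℓ, Finset.mem_sdiff.mpr ⟨hℓs, hℓnotin⟩⟩
      -- key : the min of s \ entries is ℓ
      obtain ⟨-, hdegs⟩ := decode_spec l' (s.erase ℓ) hmem' hlen'
      have hEinsert : E = insert s(ℓ, a) (E.erase s(ℓ, a)) :=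
        (Finset.insert_erase hedge).symm
      have hsne : s(ℓ, a) ∉ E.erase s(ℓ, a) := Finset.notMem_erase _ _
      have hmin : (s \ (a :: l').toFinset).min' hne = ℓ := by
        apply le_antisymm
        · exact Finset.min'_le _ _ (Finset.mem_sdiff.mpr ⟨hℓs, hℓnotin⟩)
        · apply Finset.le_min'
          intro w hw
          obtain ⟨hws, hwnot⟩ := Finset.mem_sdiff.mp hw
          by_cases hwℓ : w = ℓ
          · exact le_of_eq hwℓ.symm
          · -- w is a leaf of E
            have hwa : w ≠ a := fun h => hwnot (by simp [h])
            have hwl' : w ∉ l' := fun h => hwnot (by simp [h])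
            have hw' : w ∈ s.erase ℓ := Finset.mem_erase.mpr ⟨hwℓ, hws⟩
            have hdw : deg (E.erase s(ℓ, a)) w = 1 := by
              rw [← hdec'] at *
              rw [hdegs w hw', List.count_eq_zero_of_not_mem hwl']
            have hwdegE : deg E w = 1 := by
              rw [hEinsert, deg_insert hsne w, if_neg, hdw]
              rw [Sym2.mem_iff]
              push_neg
              exact ⟨hwℓ, hwa⟩
            exact Finset.min'_le _ _ (Finset.mem_filter.mpr ⟨hws, hwdegE⟩)
      rw [decode, dif_pos hne, hmin, hdec']
      exact hEinsert.symm

lemma card_lists (s : Finset α) (k : ℕ) :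
    Nat.card {l : List α // (∀ x ∈ l, x ∈ s) ∧ l.length = k} = s.card ^ k := by
  have e : {l : List α // (∀ x ∈ l, x ∈ s) ∧ l.length = k} ≃ (Fin k → {x // x ∈ s}) :=
    { toFun := fun ⟨l, h⟩ i => ⟨l.get ⟨i, by rw [h.2]; exact i.2⟩, h.1 _ (List.get_mem _ _)⟩
      invFun := fun f => ⟨List.ofFn (fun i => (f i).1),
        by
          constructor
          · intro x hx
            obtain ⟨i, rfl⟩ := Set.mem_range.mp (List.mem_ofFn.mp hx)
            exact (f i).2
          · exact List.length_ofFn⟩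
      left_inv := fun ⟨l, h⟩ => by
        ext1
        apply List.ext_get
        · simp [h.2]
        · intro i h1 h2
          simp
      right_inv := fun f => by
        funext i
        ext
        simp }
  rw [Nat.card_congr e]
  simp [Nat.card_eq_fintype_card]

theorem cayley (s : Finset α) (h2 : 2 ≤ s.card) :
    Nat.card {E : Finset (Sym2 α) // IsTree s E} = s.card ^ (s.card - 2) := by
  have hF : ∀ l : {l : List α // (∀ x ∈ l, x ∈ s) ∧ l.length = s.card - 2},
      IsTree s (decode s l.1) := fun ⟨l, h⟩ =>
    (decode_spec l s h.1 (by omega)).1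
  have hbij : Function.Bijective
      (fun l : {l : List α // (∀ x ∈ l, x ∈ s) ∧ l.length = s.card - 2} =>
        (⟨decode s l.1, hF l⟩ : {E : Finset (Sym2 α) // IsTree s E})) := by
    constructor
    · rintro ⟨l₁, h1⟩ ⟨l₂, h2'⟩ heq
      simp only [Subtype.mk.injEq] at heq ⊢
      exact decode_injective l₁ l₂ s h1.1 h2'.1 (by omega) (by omega) heq
    · rintro ⟨E, hE⟩
      obtain ⟨l, hmem, hlen, hdec⟩ := decode_surjective (s.card - 2) s E (by omega) hE
      exact ⟨⟨l, hmem, by omega⟩, by simp only [Subtype.mk.injEq]; exact hdec⟩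
  rw [← Nat.card_eq_of_bijective _ hbij, card_lists]

section Swaps
open Equiv Equiv.Perm

variable {n : ℕ}

/-- The swap relation induced by a set of permutations. -/
def swapRel (S : Finset (Perm (Fin n))) (a b : Fin n) : Prop := Equiv.swap a b ∈ S

lemma swapRel_symm {S : Finset (Perm (Fin n))} : Symmetric (swapRel S) := by
  intro a b h
  rwa [swapRel, Equiv.swap_comm]

lemma reach_of_mem_closure {S : Finset (Perm (Fin n))} (hS : ∀ σ ∈ S, σ.IsSwap)
    {σ : Perm (Fin n)} (hσ : σ ∈ Subgroup.closure (S : Set (Perm (Fin n)))) :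
    ∀ x, Relation.ReflTransGen (swapRel S) (σ x) x := by
  induction hσ using Subgroup.closure_induction with
  | mem τ hτ =>
    intro x
    obtain ⟨a, b, hab, rfl⟩ := hS τ hτ
    rcases eq_or_ne (Equiv.swap a b x) x with h | h
    · rw [h]
    · rw [Equiv.swap_apply_ne_self_iff] at h
      rcases h.2 with rfl | rfl
      · rw [Equiv.swap_apply_left]
        exact Relation.ReflTransGen.single (by rwa [swapRel, Equiv.swap_comm])
      · rw [Equiv.swap_apply_right]
        exact Relation.ReflTransGen.single (by rwa [swapRel])
  | one => intro x; exact Relation.ReflTransGen.refl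
  | mul σ τ hσ hτ ihσ ihτ =>
    intro x
    exact Relation.ReflTransGen.trans (ihσ (τ x)) (ihτ x)
  | inv σ hσ ihσ =>
    intro x
    have := ihσ (σ⁻¹ x)
    rw [← Perm.mul_apply, mul_inv_cancel, Perm.one_apply] at this
    haveI hsymm : Std.Symm (swapRel S) := ⟨fun a b h => swapRel_symm h⟩
    exact Std.Symm.symm (r := Relation.ReflTransGen (swapRel S)) _ _ this

lemma closure_eq_top_iff {S : Finset (Perm (Fin n))} (hS : ∀ σ ∈ S, σ.IsSwap) :
    Subgroup.closure (S : Set (Perm (Fin n))) = ⊤ ↔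
      ∀ x y : Fin n, Relation.ReflTransGen (swapRel S) x y := by
  constructor
  · intro h x y
    have hmem : Equiv.swap x y ∈ Subgroup.closure (S : Set (Perm (Fin n))) := by
      rw [h]; trivial
    have := reach_of_mem_closure hS hmem y
    rwa [Equiv.swap_apply_right] at this
  · intro h
    rw [eq_top_iff, ← Equiv.Perm.closure_isSwap]
    rw [Subgroup.closure_le]
    rintro σ ⟨x, y, hxy, rfl⟩
    have key : ∀ z : Fin n, Relation.ReflTransGen (swapRel S) x z →
        Equiv.swap x z ∈ Subgroup.closure (S : Set (Perm (Fin n))) := by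
      intro z hz
      induction hz with
      | refl => exact Equiv.swap_self x ▸ Subgroup.one_mem _
      | @tail b c hb hstep ih =>
        exact SubmonoidClass.swap_mem_trans _ ih (Subgroup.subset_closure hstep)
    exact key y (h x y)

/-- From an edge to a transposition. -/
def toSwap : Sym2 (Fin n) → Perm (Fin n) :=
  Sym2.lift ⟨Equiv.swap, Equiv.swap_comm⟩

@[simp] lemma toSwap_mk (a b : Fin n) : toSwap s(a, b) = Equiv.swap a b := rfl

lemma toSwap_inj {e₁ e₂ : Sym2 (Fin n)} (h1 : ¬ e₁.IsDiag) (h2 : ¬ e₂.IsDiag)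
    (h : toSwap e₁ = toSwap e₂) : e₁ = e₂ := by
  induction e₁ using Sym2.inductionOn with
  | hf a b =>
  induction e₂ using Sym2.inductionOn with
  | hf c d =>
  simp only [Sym2.isDiag_iff_proj_eq] at h1 h2
  simp only [toSwap_mk] at h
  have hsupp := congrArg Equiv.Perm.support h
  rw [Equiv.Perm.support_swap h1, Equiv.Perm.support_swap h2] at hsupp
  have ha : a = c ∨ a = d := by
    have : a ∈ ({c, d} : Finset (Fin n)) := hsupp ▸ (by simp)
    simpa using this
  have hb : b = c ∨ b = d := by
    have : b ∈ ({c, d} : Finset (Fin n)) := hsupp ▸ (by simp)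
    simpa using this
  rw [Sym2.eq_iff]
  rcases ha with rfl | rfl <;> rcases hb with rfl | rfl <;> tauto

lemma swapRel_image_iff {E : Finset (Sym2 (Fin n))} (hd : ∀ e ∈ E, ¬ e.IsDiag) (a b : Fin n) :
    swapRel (E.image toSwap) a b ↔ s(a, b) ∈ E := by
  rw [swapRel, Finset.mem_image]
  constructor
  · rintro ⟨e, he, hswap⟩
    have hda : ¬ (s(a, b) : Sym2 (Fin n)).IsDiag := by
      rw [Sym2.isDiag_iff_proj_eq]
      intro hab
      subst hab
      simp only [Equiv.swap_self] at hswap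
      induction e using Sym2.inductionOn with
      | hf u w =>
        have huw : u ≠ w := fun hc => hd _ he (by simp [hc])
        rw [toSwap_mk] at hswap
        exact huw (by
          have := congrArg (fun p => p u) hswap
          simpa [Equiv.swap_apply_left] using this.symm)
    rw [← toSwap_inj (hd _ he) hda hswap]
    exact he
  · intro h
    exact ⟨s(a, b), h, rfl⟩


lemma isSwap_toSwap {e : Sym2 (Fin n)} (hd : ¬ e.IsDiag) : (toSwap e).IsSwap := by
  induction e using Sym2.inductionOn with
  | hf a b =>
    rw [Sym2.isDiag_iff_proj_eq] at hd
    exact ⟨a, b, hd, rfl⟩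

lemma card_eq (n : ℕ) (hn : 0 < n) :
    Nat.card {S : Finset (Perm (Fin n)) // S.card = n - 1 ∧ (∀ t ∈ S, t.IsSwap) ∧
      Subgroup.closure (S : Set (Perm (Fin n))) = ⊤}
      = Nat.card {E : Finset (Sym2 (Fin n)) // IsTree Finset.univ E} := by
  symm
  have himg : ∀ (E : Finset (Sym2 (Fin n))), IsTree Finset.univ E →
      (E.image toSwap).card = n - 1 ∧ (∀ t ∈ E.image toSwap, t.IsSwap) ∧
        Subgroup.closure ((E.image toSwap : Finset (Perm (Fin n))) : Set (Perm (Fin n))) = ⊤ := by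
    intro E hE
    have hswaps : ∀ t ∈ E.image toSwap, t.IsSwap := by
      intro t ht
      obtain ⟨e, he, rfl⟩ := Finset.mem_image.mp ht
      exact isSwap_toSwap (hE.2.1 _ he)
    have hrel : swapRel (E.image toSwap) = fun a b => s(a, b) ∈ E := by
      funext a b
      exact propext (swapRel_image_iff hE.2.1 a b)
    refine ⟨?_, hswaps, ?_⟩
    · rw [Finset.card_image_of_injOn (fun e he f hf h => toSwap_inj (hE.2.1 _ he) (hE.2.1 _ hf) h)]
      have := hE.2.2.1
      rw [Finset.card_univ, Fintype.card_fin] at this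
      omega
    · rw [closure_eq_top_iff hswaps]
      intro x y
      rw [hrel]
      exact hE.2.2.2 x (Finset.mem_univ x) y (Finset.mem_univ y)
  apply Nat.card_eq_of_bijective
    (fun E : {E : Finset (Sym2 (Fin n)) // IsTree Finset.univ E} =>
      (⟨E.1.image toSwap, himg E.1 E.2⟩ :
        {S : Finset (Perm (Fin n)) // S.card = n - 1 ∧ (∀ t ∈ S, t.IsSwap) ∧
          Subgroup.closure (S : Set (Perm (Fin n))) = ⊤}))
  constructor
  · rintro ⟨E₁, h1⟩ ⟨E₂, h2⟩ heq
    simp only [Subtype.mk.injEq] at heq ⊢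
    ext e
    constructor
    · intro he
      have : toSwap e ∈ E₂.image toSwap := heq ▸ Finset.mem_image_of_mem _ he
      obtain ⟨f, hf, hfe⟩ := Finset.mem_image.mp this
      rwa [toSwap_inj (h2.2.1 _ hf) (h1.2.1 _ he) hfe] at hf
    · intro he
      have : toSwap e ∈ E₁.image toSwap := heq ▸ Finset.mem_image_of_mem _ he
      obtain ⟨f, hf, hfe⟩ := Finset.mem_image.mp this
      rwa [toSwap_inj (h1.2.1 _ hf) (h2.2.1 _ he) hfe] at hf
  · rintro ⟨S, hcard, hswap, hclos⟩
    set E := Finset.univ.sym2.filter (fun e => toSwap e ∈ S) with hEdef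
    have himgS : E.image toSwap = S := by
      ext σ
      constructor
      · intro hσ
        obtain ⟨e, he, rfl⟩ := Finset.mem_image.mp hσ
        exact (Finset.mem_filter.mp he).2
      · intro hσ
        obtain ⟨x, y, hxy, rfl⟩ := hswap σ hσ
        refine Finset.mem_image.mpr ⟨s(x, y), ?_, rfl⟩
        rw [hEdef, Finset.mem_filter]
        exact ⟨by simp, by rwa [toSwap_mk]⟩
    have hnd : ∀ e ∈ E, ¬ e.IsDiag := by
      intro e he hdiag
      induction e using Sym2.inductionOn with
      | hf a b =>
        rw [Sym2.isDiag_iff_proj_eq] at hdiag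
        subst hdiag
        have : toSwap s(a, a) ∈ S := (Finset.mem_filter.mp he).2
        rw [toSwap_mk, Equiv.swap_self] at this
        obtain ⟨x, y, hxy, hxy2⟩ := hswap _ this
        exact hxy (Equiv.swap_eq_one_iff.mp hxy2.symm)
    have hcardE : E.card = n - 1 := by
      rw [← hcard, ← himgS]
      rw [Finset.card_image_of_injOn (fun e he f hf h => toSwap_inj (hnd _ he) (hnd _ hf) h)]
    have hn1 : 1 ≤ n := hn
    have htree : IsTree Finset.univ E := by
      refine ⟨fun e he v hv => Finset.mem_univ v, hnd, ?_, ?_⟩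
      · rw [Finset.card_univ, Fintype.card_fin, hcardE]
        omega
      · have := (closure_eq_top_iff hswap).mp hclos
        intro x hx y hy
        have hrel : swapRel S = fun a b => s(a, b) ∈ E := by
          rw [← himgS]
          funext a b
          exact propext (swapRel_image_iff hnd a b)
        have h2 := this x y
        rwa [hrel] at h2
    exact ⟨⟨E, htree⟩, Subtype.ext himgS⟩

end Swaps


theorem stmt_18 (n : ℕ) (hn : 0 < n) :
    Nat.card {S : Finset (Equiv.Perm (Fin n)) //
        S.card = n - 1 ∧
        (∀ t ∈ S, t.IsSwap) ∧
        Subgroup.closure (S : Set (Equiv.Perm (Fin n))) = ⊤}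
      = n ^ (n - 2) := by
  rw [card_eq n hn]
  rcases Nat.lt_or_ge n 2 with h | h
  · -- n = 1
    have hn1 : n = 1 := by omega
    subst hn1
    have htree : IsTree (Finset.univ : Finset (Fin 1)) (∅ : Finset (Sym2 (Fin 1))) := by
      refine ⟨by simp, by simp, by simp, ?_⟩
      intro x hx y hy
      rw [Subsingleton.elim x y]
      exact Relation.ReflTransGen.refl
    haveI : Unique {E : Finset (Sym2 (Fin 1)) // IsTree Finset.univ E} :=
      { default := ⟨∅, htree⟩
        uniq := by
          rintro ⟨E, hE⟩
          have := hE.2.2.1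
          simp only [Finset.card_univ, Fintype.card_fin] at this
          have hE0 : E = ∅ := Finset.card_eq_zero.mp (by omega)
          simp [hE0] }
    rw [Nat.card_unique]
    norm_num
  · have h2 : 2 ≤ (Finset.univ : Finset (Fin n)).card := by
      rwa [Finset.card_univ, Fintype.card_fin]
    rw [cayley _ h2, Finset.card_univ, Fintype.card_fin]
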